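/- Let P be an n-vertex s-uniform hypergraph with δ₁(P) ≥ (1 − 1/s² + 3μ/4)·C(n−1, s−1) restricted in the following sense: let U be a family of r pairwise disjoint m₂-sets in V(P), and define the reduced s-graph R on vertex set U with an edge X whenever P contains at least 4ν·m₂^s X-partite edges (ν = μ/16). Suppose r^{s−2}·m₂^s ≤ (μ/4)·m₂^s·C(r−1, s−1) and every vertex x of R lies in at least (1 − 1/s² + 3μ/4)·m₂^s·C(r−1, s−1) U-partite edges of P through its part. Then δ₁(R) ≥ (1 − 1/s + μ/2)·C(r−1, s−1). -/

import Mathlib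

/-- degree inheritance for the reduced graph `R` on the family `U` of `r`
disjoint `m₂`-sets, whose edges are `s`-subsets `X ⊆ U` hosting at least `4ν·m₂^s`
`X`-partite edges of `P`; under the stated counting hypotheses,
`δ₁(R) ≥ (1 − 1/s + μ/2)·C(r−1,s−1)`. -/
theorem stmt11 {α : Type} [DecidableEq α] (s r m₂ : ℕ) (hs : 2 ≤ s)
    (μ ν : ℝ) (hμ : 0 < μ) (hν : ν = μ / 16)
    (P : Finset (Finset α)) (hPs : ∀ e ∈ P, e.card = s)
    (U : Finset (Finset α)) (hr : U.card = r)
    (hdisj : ∀ A ∈ U, ∀ B ∈ U, A ≠ B → Disjoint A B)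
    (hm₂ : ∀ A ∈ U, A.card = m₂)
    (hcount : (r : ℝ) ^ (s - 2) * (m₂ : ℝ) ^ s ≤
      μ / 4 * (m₂ : ℝ) ^ s * (((r - 1).choose (s - 1) : ℕ) : ℝ))
    (hdeg : ∀ x ∈ U, (1 - 1/(s:ℝ)^2 + 3*μ/4) * (m₂ : ℝ) ^ s * (((r - 1).choose (s - 1) : ℕ) : ℝ) ≤
      ((P.filter fun e => (e ∩ x).card = 1 ∧ (∀ A ∈ U, (e ∩ A).card ≤ 1) ∧
        e ⊆ U.sup id).card : ℝ)) :
    ∀ x ∈ U, (1 - 1/(s:ℝ) + μ/2) * (((r - 1).choose (s - 1) : ℕ) : ℝ) ≤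
      (((U.powersetCard s).filter fun X => x ∈ X ∧
        4 * ν * (m₂ : ℝ) ^ s ≤
          ((P.filter fun e => ∀ A ∈ X, (e ∩ A).card = 1).card : ℝ)).card : ℝ) := by
  classical
  subst hν
  intro x hx
  by_cases hm0 : m₂ = 0
  · -- degenerate case: all parts empty, so r ≤ 1 and choose = 0
    have hU1 : r ≤ 1 := by
      rw [← hr]
      by_contra h
      push_neg at h
      obtain ⟨A, hA, B, hB, hAB⟩ := Finset.one_lt_card.mp h
      apply hAB
      have hA0 : A = ∅ := Finset.card_eq_zero.mp (by rw [hm₂ A hA, hm0])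
      have hB0 : B = ∅ := Finset.card_eq_zero.mp (by rw [hm₂ B hB, hm0])
      rw [hA0, hB0]
    have hc0 : (r-1).choose (s-1) = 0 := by
      have h1 : r - 1 = 0 := by omega
      rw [h1]
      exact Nat.choose_eq_zero_of_lt (by omega)
    rw [hc0]
    simp
  have hm₂pos : 0 < m₂ := Nat.pos_of_ne_zero hm0
  set C : ℝ := (((r - 1).choose (s - 1) : ℕ) : ℝ) with hCdef
  set T : Finset (Finset (Finset α)) := (U.powersetCard s).filter (fun X => x ∈ X) with hTdef
  set D : Finset (Finset α) := P.filter fun e => (e ∩ x).card = 1 ∧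
      (∀ A ∈ U, (e ∩ A).card ≤ 1) ∧ e ⊆ U.sup id with hDdef
  set g : Finset α → Finset (Finset α) := fun e => U.filter fun A => (e ∩ A).Nonempty with hgdef
  -- basic facts about elements of D
  have hDfact : ∀ e ∈ D, e ∈ P ∧ (e ∩ x).card = 1 ∧
      (∀ A ∈ U, (e ∩ A).card ≤ 1) ∧ e ⊆ U.sup id := by
    intro e he
    have := Finset.mem_filter.mp he
    exact ⟨this.1, this.2⟩
  have hgT : ∀ e ∈ D, g e ∈ T := by
    intro e he
    obtain ⟨heP, hex, hpart, hsub⟩ := hDfact e he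
    have hgU : g e ⊆ U := Finset.filter_subset _ _
    have hcard1 : ∀ A ∈ g e, (e ∩ A).card = 1 := by
      intro A hA
      obtain ⟨hAU, hne⟩ := Finset.mem_filter.mp hA
      have h1 := hpart A hAU
      have h2 := Finset.card_pos.mpr hne
      omega
    have hbi : e = (g e).biUnion (fun A => e ∩ A) := by
      apply Finset.Subset.antisymm
      · intro v hv
        obtain ⟨A, hAU, hvA⟩ := Finset.mem_sup.mp (hsub hv)
        refine Finset.mem_biUnion.mpr ⟨A, ?_, Finset.mem_inter.mpr ⟨hv, hvA⟩⟩
        exact Finset.mem_filter.mpr ⟨hAU, ⟨v, Finset.mem_inter.mpr ⟨hv, hvA⟩⟩⟩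
      · intro v hv
        obtain ⟨A, _, hvA⟩ := Finset.mem_biUnion.mp hv
        exact (Finset.mem_inter.mp hvA).1
    have hgcard : (g e).card = s := by
      have hdisj' : ∀ A ∈ g e, ∀ B ∈ g e, A ≠ B → Disjoint (e ∩ A) (e ∩ B) := by
        intro A hA B hB hAB
        exact (hdisj A (hgU hA) B (hgU hB) hAB).mono
          Finset.inter_subset_right Finset.inter_subset_right
      have : e.card = ∑ A ∈ g e, (e ∩ A).card := by
        conv_lhs => rw [hbi]
        exact Finset.card_biUnion hdisj'
      rw [hPs e heP] at this
      rw [Finset.sum_congr rfl hcard1, Finset.sum_const, smul_eq_mul, mul_one] at this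
      omega
    refine Finset.mem_filter.mpr ⟨Finset.mem_powersetCard.mpr ⟨hgU, hgcard⟩, ?_⟩
    refine Finset.mem_filter.mpr ⟨hx, ?_⟩
    exact Finset.card_pos.mp (by omega)
  -- fiber bound by m₂ ^ s
  have hfib : ∀ X ∈ T, (D.filter fun e => g e = X).card ≤ m₂ ^ s := by
    intro X hXT
    obtain ⟨hXp, hxX⟩ := Finset.mem_filter.mp hXT
    obtain ⟨hXU, hXc⟩ := Finset.mem_powersetCard.mp hXp
    rcases Finset.eq_empty_or_nonempty (D.filter fun e => g e = X) with h | h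
    · simp [h]
    obtain ⟨e₀, he₀⟩ := h
    have he₀ne : e₀.Nonempty := by
      have hc := hPs e₀ (hDfact e₀ (Finset.mem_of_mem_filter _ he₀)).1
      rw [← Finset.card_pos, hc]; omega
    obtain ⟨v₀, _⟩ := he₀ne
    have key : (D.filter fun e => g e = X).card ≤ (X.pi fun A => A).card := by
      apply Finset.card_le_card_of_injOn
        (fun e A _ => if h : (e ∩ A).Nonempty then h.choose else v₀)
      · intro e he
        obtain ⟨heD, hge⟩ := Finset.mem_filter.mp he
        refine Finset.mem_pi.mpr ?_
        intro A hA
        have hne : (e ∩ A).Nonempty := (Finset.mem_filter.mp (hge ▸ hA : A ∈ g e)).2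
        show (if h : (e ∩ A).Nonempty then h.choose else v₀) ∈ A
        rw [dif_pos hne]
        exact (Finset.mem_inter.mp hne.choose_spec).2
      · have hsub2 : ∀ e₁ ∈ (D.filter fun e => g e = X),
            ∀ e₂ ∈ (D.filter fun e => g e = X),
            (fun A (_ : A ∈ X) => if h : (e₁ ∩ A).Nonempty then h.choose else v₀) =
            (fun A (_ : A ∈ X) => if h : (e₂ ∩ A).Nonempty then h.choose else v₀) →
            e₁ ⊆ e₂ := by
          intro e₁ h₁ e₂ h₂ hF v hv
          obtain ⟨he₁D, hge₁⟩ := Finset.mem_filter.mp h₁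
          obtain ⟨he₂D, hge₂⟩ := Finset.mem_filter.mp h₂
          obtain ⟨_, _, hpart₁, hsub₁⟩ := hDfact e₁ he₁D
          obtain ⟨A, hAU, hvA⟩ := Finset.mem_sup.mp (hsub₁ hv)
          have hvmem : v ∈ e₁ ∩ A := Finset.mem_inter.mpr ⟨hv, hvA⟩
          have hAX : A ∈ X := hge₁ ▸ Finset.mem_filter.mpr ⟨hAU, ⟨v, hvmem⟩⟩
          have hne₁ : (e₁ ∩ A).Nonempty := ⟨v, hvmem⟩
          have hne₂ : (e₂ ∩ A).Nonempty := (Finset.mem_filter.mp (hge₂ ▸ hAX : A ∈ g e₂)).2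
          have hFA := congrFun (congrFun hF A) hAX
          rw [dif_pos hne₁, dif_pos hne₂] at hFA
          have hveq : v = hne₁.choose :=
            Finset.card_le_one.mp (hpart₁ A hAU) v hvmem _ hne₁.choose_spec
          rw [hveq, hFA]
          exact (Finset.mem_inter.mp hne₂.choose_spec).1
        intro e₁ h₁ e₂ h₂ hF
        exact Finset.Subset.antisymm (hsub2 e₁ h₁ e₂ h₂ hF) (hsub2 e₂ h₂ e₁ h₁ hF.symm)
    rw [Finset.card_pi] at key
    calc (D.filter fun e => g e = X).card ≤ ∏ A ∈ X, A.card := key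
      _ = m₂ ^ s := by
          rw [Finset.prod_congr rfl (fun A hA => hm₂ A (hXU hA)), Finset.prod_const, hXc]
  -- fibers sit inside the X-partite edge sets
  have hfibP : ∀ X ∈ T, (D.filter fun e => g e = X) ⊆
      P.filter (fun e => ∀ A ∈ X, (e ∩ A).card = 1) := by
    intro X hXT e he
    obtain ⟨heD, hge⟩ := Finset.mem_filter.mp he
    obtain ⟨heP, _, hpart, _⟩ := hDfact e heD
    obtain ⟨hXp, _⟩ := Finset.mem_filter.mp hXT
    obtain ⟨hXU, _⟩ := Finset.mem_powersetCard.mp hXp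
    refine Finset.mem_filter.mpr ⟨heP, ?_⟩
    intro A hAX
    have h1 := hpart A (hXU hAX)
    have h2 : (e ∩ A).Nonempty := (Finset.mem_filter.mp (hge ▸ hAX : A ∈ g e)).2
    have := Finset.card_pos.mpr h2
    omega
  -- |T| ≤ C(r-1, s-1)
  have hTcard : T.card ≤ (r-1).choose (s-1) := by
    have key : T.card ≤ ((U.erase x).powersetCard (s-1)).card := by
      apply Finset.card_le_card_of_injOn (fun X => X.erase x)
      · intro X hX
        obtain ⟨hXp, hxX⟩ := Finset.mem_filter.mp hX
        obtain ⟨hXU, hXc⟩ := Finset.mem_powersetCard.mp hXp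
        refine Finset.mem_powersetCard.mpr ⟨?_, ?_⟩
        · intro a ha
          obtain ⟨hax, haX⟩ := Finset.mem_erase.mp ha
          exact Finset.mem_erase.mpr ⟨hax, hXU haX⟩
        · rw [Finset.card_erase_of_mem hxX, hXc]
      · intro X₁ h₁ X₂ h₂ h
        have hx₁ := (Finset.mem_filter.mp h₁).2
        have hx₂ := (Finset.mem_filter.mp h₂).2
        have h' : X₁.erase x = X₂.erase x := h
        rw [← Finset.insert_erase hx₁, ← Finset.insert_erase hx₂, h']
    rwa [Finset.card_powersetCard, Finset.card_erase_of_mem hx, hr] at key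
  -- fiberwise counting
  have hDsum : D.card = ∑ X ∈ T, (D.filter fun e => g e = X).card :=
    Finset.card_eq_sum_card_fiberwise hgT
  set Q : Finset (Finset α) → Prop := fun X =>
    4 * (μ/16) * (m₂:ℝ)^s ≤ ((P.filter fun e => ∀ A ∈ X, (e ∩ A).card = 1).card : ℝ)
    with hQdef
  have hgoal : ((U.powersetCard s).filter fun X => x ∈ X ∧ Q X) = T.filter Q := by
    rw [hTdef, Finset.filter_filter]
  have hpow : (0:ℝ) < (m₂:ℝ)^s := by
    have : (0:ℝ) < (m₂:ℝ) := by exact_mod_cast hm₂pos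
    positivity
  have h4ν : (0:ℝ) ≤ 4 * (μ/16) * (m₂:ℝ)^s := by positivity
  have h1 : (1 - 1/(s:ℝ)^2 + 3*μ/4) * (m₂:ℝ)^s * C ≤ (D.card : ℝ) := hdeg x hx
  have h2 : (D.card : ℝ) = ∑ X ∈ T, ((D.filter fun e => g e = X).card : ℝ) := by
    rw [hDsum]; push_cast; ring
  have h3 : ∑ X ∈ T, ((D.filter fun e => g e = X).card : ℝ) =
      (∑ X ∈ T.filter Q, ((D.filter fun e => g e = X).card : ℝ)) +
      ∑ X ∈ T.filter (fun X => ¬ Q X), ((D.filter fun e => g e = X).card : ℝ) :=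
    (Finset.sum_filter_add_sum_filter_not T Q _).symm
  have h4 : ∑ X ∈ T.filter Q, ((D.filter fun e => g e = X).card : ℝ) ≤
      ((T.filter Q).card : ℝ) * (m₂:ℝ)^s := by
    calc ∑ X ∈ T.filter Q, ((D.filter fun e => g e = X).card : ℝ)
        ≤ ∑ _X ∈ T.filter Q, (m₂:ℝ)^s := by
          apply Finset.sum_le_sum
          intro X hX
          exact_mod_cast hfib X (Finset.mem_of_mem_filter _ hX)
      _ = ((T.filter Q).card : ℝ) * (m₂:ℝ)^s := by
          rw [Finset.sum_const, nsmul_eq_mul]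
  have h5 : ∑ X ∈ T.filter (fun X => ¬ Q X), ((D.filter fun e => g e = X).card : ℝ) ≤
      C * (4 * (μ/16) * (m₂:ℝ)^s) := by
    calc ∑ X ∈ T.filter (fun X => ¬ Q X), ((D.filter fun e => g e = X).card : ℝ)
        ≤ ∑ _X ∈ T.filter (fun X => ¬ Q X), 4 * (μ/16) * (m₂:ℝ)^s := by
          apply Finset.sum_le_sum
          intro X hX
          have hXT := Finset.mem_of_mem_filter _ hX
          have hnQ : ¬ Q X := (Finset.mem_filter.mp hX).2
          rw [hQdef] at hnQ
          push_neg at hnQ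
          have hle : ((D.filter fun e => g e = X).card : ℝ) ≤
              ((P.filter fun e => ∀ A ∈ X, (e ∩ A).card = 1).card : ℝ) := by
            exact_mod_cast Finset.card_le_card (hfibP X hXT)
          linarith
      _ = ((T.filter (fun X => ¬ Q X)).card : ℝ) * (4 * (μ/16) * (m₂:ℝ)^s) := by
          rw [Finset.sum_const, nsmul_eq_mul]
      _ ≤ C * (4 * (μ/16) * (m₂:ℝ)^s) := by
          apply mul_le_mul_of_nonneg_right _ h4ν
          have hle : (T.filter (fun X => ¬ Q X)).card ≤ (r-1).choose (s-1) :=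
            le_trans (Finset.card_filter_le _ _) hTcard
          rw [hCdef]
          exact_mod_cast hle
  have hmain : (1 - 1/(s:ℝ)^2 + 3*μ/4) * (m₂:ℝ)^s * C ≤
      ((T.filter Q).card : ℝ) * (m₂:ℝ)^s + C * (4 * (μ/16) * (m₂:ℝ)^s) := by
    rw [h2, h3] at h1
    linarith
  have hCpos : (0:ℝ) ≤ C := Nat.cast_nonneg _
  have hmain' : ((1 - 1/(s:ℝ)^2 + 3*μ/4) * C) * (m₂:ℝ)^s ≤
      (((T.filter Q).card : ℝ) + C * (μ/4)) * (m₂:ℝ)^s := by nlinarith [hmain]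
  have hdiv := le_of_mul_le_mul_right hmain' hpow
  have hss : 1/(s:ℝ)^2 ≤ 1/(s:ℝ) := by
    have hs2 : (2:ℝ) ≤ (s:ℝ) := by exact_mod_cast hs
    rw [div_le_div_iff₀ (by positivity) (by positivity)]
    nlinarith
  have hssC := mul_le_mul_of_nonneg_right hss hCpos
  show (1 - 1/(s:ℝ) + μ/2) * C ≤
      (((U.powersetCard s).filter fun X => x ∈ X ∧ Q X).card : ℝ)
  rw [hgoal]
  nlinarith [hdiv, hssC]
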